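/- Transfer property of branching team equivalence for visible moves: in a finite-state machine, if m1 ≈^⊕ m2 and m1[t1⟩m1' with l(t1) ≠ τ, then there exist a (possibly empty) silent transition sequence σ, a transition t2, and markings m, m2' such that σ t2 is sequential, l(t2) = l(t1), •t1 ≈ •t2, t1• ≈^⊕ t2•, m2[σ⟩m[t2⟩m2', m1 ≈^⊕ m, and m1' ≈^⊕ m2'. -/

import Mathlib

/- Common framework: finite-state machines (FSMs) in the sense of Gorrieri.
   Places form a type `S`, labels a type `A` with a distinguished silent label `tau`.
   A transition is a triple `(s, ℓ, m) : S × A × Option S`, where the post-set `m`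
   is either a single place (`some s'`) or the empty marking θ (`none`).
   An FSM is given by a finite set `T` of such transitions. -/

variable {S A : Type*}

/-- `Tr T s ℓ m` : place `s` has a transition labeled `ℓ` to post-set `m` (a place or θ). -/
def Tr (T : Finset (S × A × Option S)) (s : S) (ℓ : A) (m : Option S) : Prop :=
  (s, ℓ, m) ∈ T

/-- `SilentReach T tau s m` : `s ⇒ε m`, the reflexive–transitive closure of silent moves. -/
inductive SilentReach (T : Finset (S × A × Option S)) (tau : A) : S → Option S → Prop
  | refl (s : S) : SilentReach T tau s (some s)
  | step {s s' : S} {m : Option S} :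
      SilentReach T tau s (some s') → Tr T s' tau m → SilentReach T tau s m

/-- Lift of a place relation to `Option S`; a pair involving θ (`none`) is related
    only when both components are θ. -/
def OptRel (R : S → S → Prop) : Option S → Option S → Prop
  | some a, some b => R a b
  | none, none => True
  | _, _ => False

/-- `R` is a branching bisimulation on the FSM with transitions `T` and silent label `tau`. -/
def IsBranchingBisim (T : Finset (S × A × Option S)) (tau : A) (R : S → S → Prop) : Prop :=
  ∀ s1 s2, R s1 s2 →
    (∀ ℓ m1, Tr T s1 ℓ m1 →
        (ℓ = tau ∧ ∃ m2, SilentReach T tau s2 m2 ∧ OptRel R (some s1) m2 ∧ OptRel R m1 m2) ∨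
        (∃ s m2, SilentReach T tau s2 (some s) ∧ Tr T s ℓ m2 ∧ R s1 s ∧ OptRel R m1 m2)) ∧
    (∀ ℓ m2, Tr T s2 ℓ m2 →
        (ℓ = tau ∧ ∃ m1, SilentReach T tau s1 m1 ∧ OptRel R m1 (some s2) ∧ OptRel R m1 m2) ∨
        (∃ s m1, SilentReach T tau s1 (some s) ∧ Tr T s ℓ m1 ∧ R s s2 ∧ OptRel R m1 m2))

/-- Branching bisimilarity on places: `s ≈ s'` iff some branching bisimulation relates them. -/
def Bisimilar (T : Finset (S × A × Option S)) (tau : A) (s s' : S) : Prop :=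
  ∃ R, IsBranchingBisim T tau R ∧ R s s'

/-- Rooted branching bisimilarity `≈_c` on places. -/
def RootedBisimilar (T : Finset (S × A × Option S)) (tau : A) (s1 s2 : S) : Prop :=
  ∀ ℓ : A,
    (∀ m1, Tr T s1 ℓ m1 → ∃ m2, Tr T s2 ℓ m2 ∧ OptRel (Bisimilar T tau) m1 m2) ∧
    (∀ m2, Tr T s2 ℓ m2 → ∃ m1, Tr T s1 ℓ m1 ∧ OptRel (Bisimilar T tau) m1 m2)

/-- The post-set of a transition, as a marking (multiset). -/
def mpost (m : Option S) : Multiset S :=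
  m.elim 0 (fun s => {s})

variable [DecidableEq S] [DecidableEq A]

/-- `Fires T m t m'` : transition `t` is enabled at marking `m` (`•t ∈ m`) and its
    firing produces `m' = (m ⊖ •t) ⊕ t•`. -/
def Fires (T : Finset (S × A × Option S)) (m : Multiset S) (t : S × A × Option S)
    (m' : Multiset S) : Prop :=
  t ∈ T ∧ t.1 ∈ m ∧ m' = m.erase t.1 + mpost t.2.2

/-- `MStep T m ℓ m'` : marking `m` evolves to `m'` by firing some `ℓ`-labeled transition. -/
def MStep (T : Finset (S × A × Option S)) (m : Multiset S) (ℓ : A) (m' : Multiset S) : Prop :=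
  ∃ t, Fires T m t m' ∧ t.2.1 = ℓ

/-- `Reach T m m'` : `m' ∈ reach(m)`, i.e. `m'` is reachable from `m` by a firing sequence. -/
def Reach (T : Finset (S × A × Option S)) : Multiset S → Multiset S → Prop :=
  Relation.ReflTransGen (fun m m' => ∃ t, Fires T m t m')

/-- The additive closure `R^⊕` of a place relation `R`, relating markings. -/
inductive AddClosure (R : S → S → Prop) : Multiset S → Multiset S → Prop
  | zero : AddClosure R 0 0
  | cons {s1 s2 : S} {m1 m2 : Multiset S} :
      R s1 s2 → AddClosure R m1 m2 → AddClosure R (s1 ::ₘ m1) (s2 ::ₘ m2)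

/-- The restricted net `N \ H`: all transitions with a label in `H` are pruned.
    (Places `s\H` of the restricted net are identified with the places `s` of `N`.) -/
def restrictNet (T : Finset (S × A × Option S)) (H : Finset A) : Finset (S × A × Option S) :=
  T.filter (fun t => t.2.1 ∉ H)

/-- `DNI T tau H m0` : for all markings `m1, m2` reachable from `m0` and every `h ∈ H`
    with `m1 →h m2`, the restricted markings are branching team equivalent in `N \ H`. -/
def DNI (T : Finset (S × A × Option S)) (tau : A) (H : Finset A) (m0 : Multiset S) : Prop :=
  ∀ m1 m2, Reach T m0 m1 → Reach T m0 m2 →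
    ∀ h ∈ H, MStep T m1 h m2 → AddClosure (Bisimilar (restrictNet T H) tau) m1 m2

/-- `FiresSeq T m σ m'` : the transition sequence `σ` can fire from `m` ending in `m'`. -/
inductive FiresSeq (T : Finset (S × A × Option S)) : Multiset S → List (S × A × Option S) → Multiset S → Prop
  | nil (m : Multiset S) : FiresSeq T m [] m
  | cons {m m' m'' : Multiset S} {t : S × A × Option S} {σ : List (S × A × Option S)} :
      Fires T m t m' → FiresSeq T m' σ m'' → FiresSeq T m (t :: σ) m''

section Aux

variable [DecidableEq S] [DecidableEq A]

lemma addClosure_mem {R : S → S → Prop} {m1 m2 : Multiset S}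
    (h : AddClosure R m1 m2) {s1 : S} (hs : s1 ∈ m1) :
    ∃ s2 ∈ m2, R s1 s2 ∧ AddClosure R (m1.erase s1) (m2.erase s2) := by
  induction h with
  | zero => simp at hs
  | cons hR hcl ih =>
    rename_i a b n1 n2
    by_cases he : s1 = a
    · subst he
      exact ⟨b, Multiset.mem_cons_self _ _, hR, by
        simpa [Multiset.erase_cons_head] using hcl⟩
    · have hs1 : s1 ∈ n1 := by
        rcases Multiset.mem_cons.1 hs with h' | h'
        · exact absurd h' he
        · exact h'
      obtain ⟨s2, hs2, hR2, hcl2⟩ := ih hs1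
      refine ⟨s2, Multiset.mem_cons_of_mem hs2, hR2, ?_⟩
      rw [Multiset.erase_cons_tail_of_mem hs1,
        Multiset.erase_cons_tail_of_mem hs2]
      exact AddClosure.cons hR hcl2

lemma addClosure_add {R : S → S → Prop} {a b c d : Multiset S}
    (h1 : AddClosure R a b) (h2 : AddClosure R c d) :
    AddClosure R (a + c) (b + d) := by
  induction h1 with
  | zero => simpa using h2
  | cons hR _ ih =>
    simpa [Multiset.cons_add] using AddClosure.cons hR ih

lemma addClosure_mpost {R : S → S → Prop} {p q : Option S}
    (h : OptRel R p q) : AddClosure R (mpost p) (mpost q) := by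
  cases p <;> cases q <;> simp [OptRel] at h <;>
    simp [mpost] <;> first
      | exact AddClosure.zero
      | exact AddClosure.cons h AddClosure.zero

lemma addClosure_mono {R R' : S → S → Prop} (h : ∀ a b, R a b → R' a b)
    {m1 m2 : Multiset S} (hc : AddClosure R m1 m2) : AddClosure R' m1 m2 := by
  induction hc with
  | zero => exact AddClosure.zero
  | cons hr _ ih => exact AddClosure.cons (h _ _ hr) ih

lemma firesSeq_append {T : Finset (S × A × Option S)} {m m' m'' : Multiset S}
    {σ : List (S × A × Option S)} {t : S × A × Option S}
    (h1 : FiresSeq T m σ m') (h2 : Fires T m' t m'') :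
    FiresSeq T m (σ ++ [t]) m'' := by
  induction h1 with
  | nil => exact FiresSeq.cons h2 (FiresSeq.nil _)
  | cons hf _ ih => exact FiresSeq.cons hf (ih h2)

lemma silent_seq {T : Finset (S × A × Option S)} {tau : A} {a : S} {mm : Option S}
    (h : SilentReach T tau a mm) : ∀ b : S, mm = some b →
    ∃ σ : List (S × A × Option S),
      (∀ t ∈ σ, t.2.1 = tau) ∧
      (∀ x : S × A × Option S, x.1 = b →
        List.Chain' (fun a b => a.2.2 = some b.1) (σ ++ [x])) ∧
      (∀ rest : Multiset S, FiresSeq T (a ::ₘ rest) σ (b ::ₘ rest)) := by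
  induction h with
  | refl =>
    intro b hb; cases hb
    exact ⟨[], by simp, fun x _ => List.isChain_singleton _, fun rest => FiresSeq.nil _⟩
  | step hr ht ih =>
    rename_i s s' m
    intro b hb; subst hb
    obtain ⟨σ, hsil, hch, hfs⟩ := ih s' rfl
    refine ⟨σ ++ [(s', tau, some b)], ?_, ?_, ?_⟩
    · intro t htm
      rcases List.mem_append.1 htm with h' | h'
      · exact hsil t h'
      · simp at h'; subst h'; rfl
    · intro x hx
      have := hch (s', tau, some b) rfl
      rw [List.append_assoc]
      refine List.IsChain.append ?_ ?_ ?_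
      · exact (List.isChain_append.1 this).1
      · simpa using hx.symm
      · intro p hp q hq
        simp at hq; subst hq
        exact (List.isChain_append.1 this).2.2 p hp _ (by simp)
    · intro rest
      refine firesSeq_append (hfs rest) ?_
      refine ⟨ht, Multiset.mem_cons_self _ _, ?_⟩
      simp [mpost, Multiset.erase_cons_head]
      rw [add_comm, Multiset.singleton_add]

lemma bisim_of_R {T : Finset (S × A × Option S)} {tau : A} {R : S → S → Prop}
    (hR : IsBranchingBisim T tau R) {s1 s2 : S} (h : R s1 s2) :
    Bisimilar T tau s1 s2 := ⟨R, hR, h⟩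

lemma optRel_bisim_of_R {T : Finset (S × A × Option S)} {tau : A} {R : S → S → Prop}
    (hR : IsBranchingBisim T tau R) {p q : Option S} (h : OptRel R p q) :
    OptRel (Bisimilar T tau) p q := by
  cases p <;> cases q <;> simp [OptRel] at h ⊢ <;> try exact bisim_of_R hR h

end Aux

/-- Transfer property of branching team equivalence for visible moves:
    if `m1 ≈^⊕ m2` and `m1 [t1⟩ m1'` with `l(t1) ≠ τ`, then there are a silent transition
    sequence `σ`, a transition `t2`, and markings `m`, `m2'` such that `σ t2` is
    sequential, `l(t2) = l(t1)`, `•t1 ≈ •t2`, `t1• ≈^⊕ t2•`, `m2 [σ⟩ m [t2⟩ m2'`,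
    `m1 ≈^⊕ m` and `m1' ≈^⊕ m2'`. -/
theorem team_transfer_visible [Fintype S] [Fintype A] [DecidableEq S] [DecidableEq A]
    (T : Finset (S × A × Option S)) (tau : A)
    {m1 m2 m1' : Multiset S} {t1 : S × A × Option S}
    (hbis : AddClosure (Bisimilar T tau) m1 m2)
    (hfire : Fires T m1 t1 m1') (hvis : t1.2.1 ≠ tau) :
    ∃ (σ : List (S × A × Option S)) (t2 : S × A × Option S) (m m2' : Multiset S),
      List.Chain' (fun a b => a.2.2 = some b.1) (σ ++ [t2]) ∧
      (∀ t ∈ σ, t.2.1 = tau) ∧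
      t2.2.1 = t1.2.1 ∧
      Bisimilar T tau t1.1 t2.1 ∧
      OptRel (Bisimilar T tau) t1.2.2 t2.2.2 ∧
      FiresSeq T m2 σ m ∧ Fires T m t2 m2' ∧
      AddClosure (Bisimilar T tau) m1 m ∧
      AddClosure (Bisimilar T tau) m1' m2' := by
  obtain ⟨hmem, hpre, hm1'⟩ := hfire
  obtain ⟨s1, ℓ, p⟩ := t1
  simp only at hpre hm1' hvis ⊢
  -- decompose the team equivalence at s1
  obtain ⟨s2, hs2mem, ⟨R, hRbb, hRs⟩, hrest⟩ := addClosure_mem hbis hpre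
  -- the related elements of erased markings are Bisimilar
  -- use the bisimulation to transfer the visible move
  have htr : Tr T s1 ℓ p := hmem
  have := (hRbb s1 s2 hRs).1 ℓ p htr
  rcases this with ⟨hτ, _⟩ | ⟨s, q, hreach, htr2, hRs1s, hRpq⟩
  · exact absurd hτ hvis
  -- build the silent firing sequence from m2
  obtain ⟨σ, hsil, hch, hfs⟩ := silent_seq hreach s rfl
  set rest2 := m2.erase s2 with hrest2
  have hm2eq : m2 = s2 ::ₘ rest2 := (Multiset.cons_erase hs2mem).symm
  refine ⟨σ, (s, ℓ, q), s ::ₘ rest2, rest2 + mpost q, ?_, hsil, rfl,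
    bisim_of_R hRbb hRs1s, optRel_bisim_of_R hRbb hRpq, ?_, ?_, ?_, ?_⟩
  · exact hch (s, ℓ, q) rfl
  · rw [hm2eq]; exact hfs rest2
  · exact ⟨htr2, Multiset.mem_cons_self _ _, by
      simp [Multiset.erase_cons_head]⟩
  · have hm1eq : m1 = s1 ::ₘ m1.erase s1 := (Multiset.cons_erase hpre).symm
    rw [hm1eq]
    exact AddClosure.cons (bisim_of_R hRbb hRs1s)
      hrest
  · rw [hm1']
    refine addClosure_add ?_ (addClosure_mpost (optRel_bisim_of_R hRbb hRpq))
    exact hrest
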